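/- The digital 𝟏-annihilation operator a₁ : V^⊗(n+1) → V^⊗n over Z₂ sends the basis element 𝟎 ⊗ 𝟎 ⊗ ⋯ ⊗ 𝟎 to 0, and sends every other basis element to a nonzero element; in particular a₁ is surjective for n ≥ 0. -/

import Mathlib

open Finset

/-- The basis element of `V^{⊗n}` (over `ℤ₂`) indexed by the Bool string `y`
(`true` = 𝟏, `false` = 𝟎), as an element of the function model `(Fin n → Bool) → ZMod 2`. -/
def sgl {n : ℕ} (y : Fin n → Bool) : (Fin n → Bool) → ZMod 2 :=
  fun z => if z = y then 1 else 0

/-- The 𝟏-grading: number of 𝟏 (`true`) factors. -/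
def ones {n : ℕ} (x : Fin n → Bool) : ℕ :=
  (Finset.univ.filter fun i => x i = true).card

/-- The 𝟎-grading: number of 𝟎 (`false`) factors. -/
def zeros {n : ℕ} (x : Fin n → Bool) : ℕ :=
  (Finset.univ.filter fun i => x i = false).card

/-- The image of a basis element under the digital 𝟏-annihilation operator
`a₁ : V^{⊗(n+1)} → V^{⊗n}` (annihilating the first factor):
`a₁(𝟏 ⊗ x) = x` and `a₁(𝟎 ⊗ x) = Σ_{i : xᵢ = 𝟏} (x with xᵢ replaced by 𝟎)`. -/
def a1B {n : ℕ} (x : Fin (n + 1) → Bool) : (Fin n → Bool) → ZMod 2 :=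
  if x 0 = true then sgl (Fin.tail x)
  else ∑ i ∈ Finset.univ.filter fun i => Fin.tail x i = true,
    sgl (Function.update (Fin.tail x) i false)

/-- The digital 𝟏-annihilation operator, extended `ℤ₂`-linearly. -/
def a1 {n : ℕ} (f : (Fin (n + 1) → Bool) → ZMod 2) : (Fin n → Bool) → ZMod 2 :=
  ∑ x : Fin (n + 1) → Bool, f x • a1B x

lemma a1B_cons_true {n : ℕ} (y : Fin n → Bool) : a1B (Fin.cons true y) = sgl y := by
  simp [a1B, Fin.tail_cons]

/-- `a₁` sends the basis element `𝟎 ⊗ ⋯ ⊗ 𝟎` to `0`, sends every other basis element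
to a nonzero element, and is surjective. -/
theorem a1_kernel_and_surjective (n : ℕ) :
    a1B (n := n) (fun _ => false) = 0 ∧
    (∀ x : Fin (n + 1) → Bool, x ≠ (fun _ => false) → a1B x ≠ 0) ∧
    Function.Surjective (a1 (n := n)) := by
  refine ⟨?_, ?_, ?_⟩
  · simp [a1B, Fin.tail]
  · intro x hx h0
    by_cases hx0 : x 0 = true
    · have := congrFun h0 (Fin.tail x)
      simp [a1B, hx0, sgl] at this
    · -- there is some j with tail x j = true
      obtain ⟨i, hi⟩ : ∃ i, x i = true := by
        by_contra hall
        push_neg at hall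
        exact hx (funext fun i => by simpa using hall i)
      rcases Fin.eq_zero_or_eq_succ i with h | ⟨j, rfl⟩
      · exact absurd (h ▸ hi) hx0
      have hj : Fin.tail x j = true := hi
      have := congrFun h0 (Function.update (Fin.tail x) j false)
      rw [a1B, if_neg hx0] at this
      simp only [Finset.sum_apply, sgl] at this
      rw [Finset.sum_congr rfl (g := fun i => if i = j then (1 : ZMod 2) else 0)
        (fun i hi => ?_)] at this
      · rw [Finset.sum_ite_eq' _ j] at this
        simp [hj] at this
      · simp only [Finset.mem_filter] at hi
        congr 1
        simp only [eq_iff_iff]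
        constructor
        · intro h
          by_contra hij
          have := congrFun h i
          simp [Function.update_of_ne hij, hi.2] at this
        · rintro rfl; rfl
  · intro g
    refine ⟨fun x => if x 0 = true then g (Fin.tail x) else 0, ?_⟩
    funext z
    have : (a1 (fun x => if x 0 = true then g (Fin.tail x) else 0)) z
        = ∑ x : Fin (n + 1) → Bool, (if x 0 = true then g (Fin.tail x) else 0) * a1B x z := by
      simp only [a1, Finset.sum_apply, Pi.smul_apply, smul_eq_mul]
    rw [this]
    rw [← Fintype.sum_equiv (Fin.consEquiv fun _ => Bool)
      (fun p : Bool × (Fin n → Bool) =>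
        (if (Fin.cons p.1 p.2 : Fin (n+1) → Bool) 0 = true then g (Fin.tail (Fin.cons p.1 p.2 : Fin (n+1) → Bool)) else 0)
          * a1B (Fin.cons p.1 p.2) z) _ (fun p => by simp [Fin.consEquiv])]
    rw [Fintype.sum_prod_type]
    simp only [Fin.cons_zero, Fin.tail_cons]
    rw [Fintype.sum_bool]
    simp [a1B_cons_true, sgl, Finset.sum_ite_eq']
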